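/- arXiv:2302.12786 — 6 statements merged into one kernel-verified Lean document; each statement's English description precedes it below -/
import Mathlib

section
/- Let X be a normed vector space, Φ : X → [0,+∞] convex, v ∈ X and τ > 0. If u and u' both minimize the functional w ↦ Φ(w) + ‖w − v‖²/(2τ) over X, then ‖u − v‖ = ‖u' − v‖. -/
open scoped ENNReal

theorem stmt1 {X : Type*} [NormedAddCommGroup X] [NormedSpace ℝ X]
    (Φ : X → ℝ≥0∞)
    (hconv : ∀ w w' : X, ∀ θ : ℝ, 0 ≤ θ → θ ≤ 1 →
      Φ (θ • w + (1 - θ) • w') ≤ ENNReal.ofReal θ * Φ w + ENNReal.ofReal (1 - θ) * Φ w')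
    (v : X) (τ : ℝ) (hτ : 0 < τ) (u u' : X) (hfin : Φ u ≠ ⊤)
    (hu : ∀ w : X, Φ u + ENNReal.ofReal (‖u - v‖ ^ 2 / (2 * τ)) ≤
      Φ w + ENNReal.ofReal (‖w - v‖ ^ 2 / (2 * τ)))
    (hu' : ∀ w : X, Φ u' + ENNReal.ofReal (‖u' - v‖ ^ 2 / (2 * τ)) ≤
      Φ w + ENNReal.ofReal (‖w - v‖ ^ 2 / (2 * τ))) :
    ‖u - v‖ = ‖u' - v‖ := by
  have hc : (0:ℝ) < 2 * τ := by linarith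
  set a := ‖u - v‖ with ha
  set b := ‖u' - v‖ with hb
  -- finiteness of Φ u'
  have hfinA : Φ u + ENNReal.ofReal (a ^ 2 / (2 * τ)) ≠ ⊤ := by
    simp [hfin, ENNReal.ofReal_ne_top]
  have hfin' : Φ u' ≠ ⊤ := by
    intro h
    have h2 := hu' u
    rw [h, top_add] at h2
    exact hfinA (top_le_iff.1 h2)
  -- midpoint
  set m := (1/2 : ℝ) • u + (1/2 : ℝ) • u' with hm
  have hconvm : Φ m ≤ ENNReal.ofReal (1/2) * Φ u + ENNReal.ofReal (1/2) * Φ u' := by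
    have h2 := hconv u u' (1/2) (by norm_num) (by norm_num)
    norm_num at h2
    exact h2
  have hfinm : Φ m ≠ ⊤ := by
    intro h
    rw [h] at hconvm
    have : ENNReal.ofReal (1/2) * Φ u + ENNReal.ofReal (1/2) * Φ u' ≠ ⊤ := by
      apply ENNReal.add_ne_top.2
      constructor <;> exact ENNReal.mul_ne_top ENNReal.ofReal_ne_top (by assumption)
    exact this (top_le_iff.1 hconvm)
  -- distance of midpoint to v
  have hmd : ‖m - v‖ ≤ (a + b) / 2 := by
    have : m - v = (1/2 : ℝ) • (u - v) + (1/2 : ℝ) • (u' - v) := by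
      rw [hm]; module
    rw [this]
    calc ‖(1/2 : ℝ) • (u - v) + (1/2 : ℝ) • (u' - v)‖
        ≤ ‖(1/2 : ℝ) • (u - v)‖ + ‖(1/2 : ℝ) • (u' - v)‖ := norm_add_le _ _
      _ = (a + b) / 2 := by
          rw [norm_smul, norm_smul]; simp [ha, hb]; ring
  -- convert key inequalities to reals
  have hnn : ∀ r : ℝ, 0 ≤ r → ∀ (p : ℝ≥0∞), p ≠ ⊤ →
      (p + ENNReal.ofReal r).toReal = p.toReal + r := by
    intro r hr p hp
    rw [ENNReal.toReal_add hp ENNReal.ofReal_ne_top, ENNReal.toReal_ofReal hr]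
  have ha2 : 0 ≤ a ^ 2 / (2 * τ) := by positivity
  have hb2 : 0 ≤ b ^ 2 / (2 * τ) := by positivity
  have hm2 : 0 ≤ ‖m - v‖ ^ 2 / (2 * τ) := by positivity
  set α := (Φ u).toReal
  set β := (Φ u').toReal
  set γ := (Φ m).toReal
  have key1 : α + a ^ 2 / (2 * τ) ≤ γ + ‖m - v‖ ^ 2 / (2 * τ) := by
    have h := hu m
    have := ENNReal.toReal_le_toReal (by simp [hfin]) (by simp [hfinm]) |>.mpr h
    rwa [hnn _ ha2 _ hfin, hnn _ hm2 _ hfinm] at this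
  have key2 : β + b ^ 2 / (2 * τ) ≤ γ + ‖m - v‖ ^ 2 / (2 * τ) := by
    have h := hu' m
    have := ENNReal.toReal_le_toReal (by simp [hfin']) (by simp [hfinm]) |>.mpr h
    rwa [hnn _ hb2 _ hfin', hnn _ hm2 _ hfinm] at this
  have key3 : γ ≤ α / 2 + β / 2 := by
    have := ENNReal.toReal_le_toReal hfinm (by
      apply ENNReal.add_ne_top.2
      constructor <;> exact ENNReal.mul_ne_top ENNReal.ofReal_ne_top (by assumption)) |>.mpr hconvm
    rw [ENNReal.toReal_add (ENNReal.mul_ne_top ENNReal.ofReal_ne_top hfin)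
      (ENNReal.mul_ne_top ENNReal.ofReal_ne_top hfin'),
      ENNReal.toReal_mul, ENNReal.toReal_mul, ENNReal.toReal_ofReal (by norm_num : (0:ℝ) ≤ 1/2)] at this
    linarith [this]
  have hmnn : (0:ℝ) ≤ ‖m - v‖ := norm_nonneg _
  have hann : (0:ℝ) ≤ a := norm_nonneg _
  have hbnn : (0:ℝ) ≤ b := norm_nonneg _
  have hmsq : ‖m - v‖ ^ 2 ≤ ((a + b) / 2) ^ 2 := by nlinarith
  have hsum : a ^ 2 / (2*τ) + b ^ 2 / (2*τ) ≤ 2 * (‖m - v‖ ^ 2 / (2*τ)) := by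
    linarith
  have hsum2 : a ^ 2 + b ^ 2 ≤ 2 * ‖m - v‖ ^ 2 := by
    have := mul_le_mul_of_nonneg_right hsum (le_of_lt hc)
    field_simp at this
    linarith
  nlinarith [hsum2, hmsq]
end

section
/- Let Φ : X → [0,+∞], Φ(u⁰) < +∞, τ > 0, and (uⁿ) the minimizing-movement sequence (uⁿ minimizes Φ(w) + ‖w − uⁿ⁻¹‖²/(2τ)). Then for all integers 0 ≤ m < n, ‖uⁿ − uᵐ‖² ≤ 2 (Φ(uᵐ) − Φ(uⁿ)) (n − m) τ ≤ 2 Φ(u⁰) (n − m) τ. -/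
open scoped ENNReal

theorem stmt3 {X : Type*} [NormedAddCommGroup X]
    (Φ : X → ℝ≥0∞) (τ : ℝ) (hτ : 0 < τ) (u : ℕ → X)
    (hfin : Φ (u 0) < ⊤)
    (hmin : ∀ n : ℕ, ∀ w : X,
      Φ (u (n + 1)) + ENNReal.ofReal (‖u (n + 1) - u n‖ ^ 2 / (2 * τ)) ≤
        Φ w + ENNReal.ofReal (‖w - u n‖ ^ 2 / (2 * τ))) :
    ∀ m n : ℕ, m < n →
      ENNReal.ofReal (‖u n - u m‖ ^ 2) ≤
        (Φ (u m) - Φ (u n)) * ENNReal.ofReal (2 * ((n : ℝ) - m) * τ) ∧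
      (Φ (u m) - Φ (u n)) * ENNReal.ofReal (2 * ((n : ℝ) - m) * τ) ≤
        Φ (u 0) * ENNReal.ofReal (2 * ((n : ℝ) - m) * τ) := by
  have hstep : ∀ k, Φ (u (k+1)) + ENNReal.ofReal (‖u (k+1) - u k‖ ^ 2 / (2 * τ)) ≤ Φ (u k) := by
    intro k
    have := hmin k (u k)
    simpa using this
  have hmono : ∀ k, Φ (u (k+1)) ≤ Φ (u k) :=
    fun k => le_trans (le_add_right le_rfl) (hstep k)
  have hanti : Antitone fun k => Φ (u k) := antitone_nat_of_succ_le hmono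
  have hfK : ∀ k, Φ (u k) < ⊤ := fun k => lt_of_le_of_lt (hanti (Nat.zero_le k)) hfin
  set φ : ℕ → ℝ := fun k => (Φ (u k)).toReal with hφ
  have hφnn : ∀ k, 0 ≤ φ k := fun k => ENNReal.toReal_nonneg
  have hstepR : ∀ k, φ (k+1) + ‖u (k+1) - u k‖ ^ 2 / (2 * τ) ≤ φ k := by
    intro k
    have h1 := ENNReal.toReal_mono (hfK k).ne (hstep k)
    rw [ENNReal.toReal_add (hfK (k+1)).ne ENNReal.ofReal_ne_top,
      ENNReal.toReal_ofReal (by positivity)] at h1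
    exact h1
  have hsum : ∀ m n : ℕ, m ≤ n →
      ∑ k ∈ Finset.Ico m n, ‖u (k+1) - u k‖ ^ 2 / (2 * τ) ≤ φ m - φ n := by
    intro m n h
    induction n, h using Nat.le_induction with
    | base => simp
    | succ n hmn ih =>
      rw [Finset.sum_Ico_succ_top hmn]
      have := hstepR n
      linarith
  intro m n hmn
  have hmn' : m ≤ n := hmn.le
  -- telescoping
  have htel : u n - u m = ∑ k ∈ Finset.Ico m n, (u (k+1) - u k) := by
    rw [Finset.sum_Ico_eq_sub _ hmn', Finset.sum_range_sub, Finset.sum_range_sub]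
    abel
  have hnorm : ‖u n - u m‖ ≤ ∑ k ∈ Finset.Ico m n, ‖u (k+1) - u k‖ := by
    rw [htel]; exact norm_sum_le _ _
  have hcs : (∑ k ∈ Finset.Ico m n, ‖u (k+1) - u k‖) ^ 2 ≤
      ((n : ℝ) - m) * ∑ k ∈ Finset.Ico m n, ‖u (k+1) - u k‖ ^ 2 := by
    have := sq_sum_le_card_mul_sum_sq (s := Finset.Ico m n)
      (f := fun k => ‖u (k+1) - u k‖)
    rwa [Nat.card_Ico, Nat.cast_sub hmn'] at this
  have hsum2 : ∑ k ∈ Finset.Ico m n, ‖u (k+1) - u k‖ ^ 2 ≤ 2 * τ * (φ m - φ n) := by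
    have h := hsum m n hmn'
    have h2 : ∑ k ∈ Finset.Ico m n, ‖u (k+1) - u k‖ ^ 2
        = 2 * τ * ∑ k ∈ Finset.Ico m n, ‖u (k+1) - u k‖ ^ 2 / (2 * τ) := by
      rw [Finset.mul_sum]
      refine Finset.sum_congr rfl fun k _ => ?_
      field_simp
    rw [h2]
    exact mul_le_mul_of_nonneg_left h (by positivity)
  have hkey : ‖u n - u m‖ ^ 2 ≤ (φ m - φ n) * (2 * ((n : ℝ) - m) * τ) := by
    have h1 : ‖u n - u m‖ ^ 2 ≤ (∑ k ∈ Finset.Ico m n, ‖u (k+1) - u k‖) ^ 2 := by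
      apply sq_le_sq' <;> nlinarith [norm_nonneg (u n - u m),
        Finset.sum_nonneg (fun k (_ : k ∈ Finset.Ico m n) => norm_nonneg (u (k+1) - u k))]
    have hnm : (0:ℝ) ≤ (n : ℝ) - m := by
      have : (m : ℝ) ≤ n := Nat.cast_le.mpr hmn'
      linarith
    calc ‖u n - u m‖ ^ 2 ≤ ((n : ℝ) - m) * ∑ k ∈ Finset.Ico m n, ‖u (k+1) - u k‖ ^ 2 :=
          le_trans h1 hcs
      _ ≤ ((n : ℝ) - m) * (2 * τ * (φ m - φ n)) :=
          mul_le_mul_of_nonneg_left hsum2 hnm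
      _ = (φ m - φ n) * (2 * ((n : ℝ) - m) * τ) := by ring
  have hφle : φ n ≤ φ m :=
    ENNReal.toReal_mono (hfK m).ne (hanti hmn')
  have hsubeq : Φ (u m) - Φ (u n) = ENNReal.ofReal (φ m - φ n) := by
    rw [ENNReal.ofReal_sub _ (hφnn n), ENNReal.ofReal_toReal (hfK m).ne,
      ENNReal.ofReal_toReal (hfK n).ne]
  constructor
  · rw [hsubeq, ← ENNReal.ofReal_mul (by linarith)]
    exact ENNReal.ofReal_le_ofReal hkey
  · refine mul_le_mul_left ?_ _
    exact le_trans tsub_le_self (hanti (Nat.zero_le m))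
end

section
/- Let (Ω, μ) be a measure space and Φ : L¹(μ) → [0,+∞] convex satisfying the submodularity inequality Φ(u∧v) + Φ(u∨v) ≤ Φ(u) + Φ(v) for all u, v ∈ L¹(μ). If u, v ∈ L¹(μ), p, q ∈ L^∞(μ) with p ∈ ∂Φ(u) and q ∈ ∂Φ(v) (subgradients in the (L¹, L^∞) duality), then ∫ (q − p)(v − u)⁺ dμ ≥ 0 and ∫ (q − p)(v − u)⁻ dμ ≤ 0. -/
open MeasureTheory
open scoped ENNReal

private lemma stmt4_aux {Ω : Type*} [MeasurableSpace Ω] (μ : Measure Ω)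
    (Φ : Lp ℝ 1 μ → ℝ≥0∞)
    (hsub : ∀ w w' : Lp ℝ 1 μ, Φ (w ⊓ w') + Φ (w ⊔ w') ≤ Φ w + Φ w')
    (u v : Lp ℝ 1 μ) (p q : Lp ℝ ⊤ μ)
    (hΦu : Φ u ≠ ⊤) (hΦv : Φ v ≠ ⊤)
    (hp : ∀ w : Lp ℝ 1 μ,
      ENNReal.ofReal ((Φ u).toReal + ∫ x, p x * (w x - u x) ∂μ) ≤ Φ w)
    (hq : ∀ w : Lp ℝ 1 μ,
      ENNReal.ofReal ((Φ v).toReal + ∫ x, q x * (w x - v x) ∂μ) ≤ Φ w) :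
    0 ≤ ∫ x, (q x - p x) * max (v x - u x) 0 ∂μ := by
  set f : Ω → ℝ := fun x => max (v x - u x) 0 with hf
  -- finiteness
  have htop : Φ u + Φ v ≠ ⊤ := ENNReal.add_ne_top.2 ⟨hΦu, hΦv⟩
  have hABle : Φ (u ⊓ v) + Φ (u ⊔ v) ≤ Φ u + Φ v := hsub u v
  have hAB : Φ (u ⊓ v) + Φ (u ⊔ v) ≠ ⊤ := fun h => htop (top_le_iff.1 (h ▸ hABle))
  have hA : Φ (u ⊓ v) ≠ ⊤ := fun h => hAB (by simp [h])
  have hB : Φ (u ⊔ v) ≠ ⊤ := fun h => hAB (by simp [h])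
  -- real inequalities from subgradients
  have h1 : (Φ u).toReal + ∫ x, p x * ((u ⊔ v) x - u x) ∂μ ≤ (Φ (u ⊔ v)).toReal :=
    (ENNReal.ofReal_le_iff_le_toReal hB).1 (hp (u ⊔ v))
  have h2 : (Φ v).toReal + ∫ x, q x * ((u ⊓ v) x - v x) ∂μ ≤ (Φ (u ⊓ v)).toReal :=
    (ENNReal.ofReal_le_iff_le_toReal hA).1 (hq (u ⊓ v))
  have hsumR : (Φ (u ⊓ v)).toReal + (Φ (u ⊔ v)).toReal ≤ (Φ u).toReal + (Φ v).toReal := by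
    rw [← ENNReal.toReal_add hA hB, ← ENNReal.toReal_add hΦu hΦv]
    exact ENNReal.toReal_mono htop hABle
  -- a.e. identities
  have hsupeq : ∀ᵐ x ∂μ, (u ⊔ v) x - u x = f x := by
    filter_upwards [Lp.coeFn_sup u v] with x hx
    rw [hx]
    rcases le_total (u x) (v x) with h | h
    · simp [hf, max_eq_right h, max_eq_left (sub_nonneg.2 h)]
    · simp [hf, max_eq_left h, max_eq_right (sub_nonpos.2 h)]
  have hinfeq : ∀ᵐ x ∂μ, (u ⊓ v) x - v x = -f x := by
    filter_upwards [Lp.coeFn_inf u v] with x hx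
    rw [hx]
    rcases le_total (u x) (v x) with h | h
    · simp only [hf, Pi.inf_apply, min_eq_left h,
        max_eq_left (sub_nonneg.2 h)]
      ring
    · simp [hf, Pi.inf_apply, min_eq_right h,
        max_eq_right (sub_nonpos.2 h)]
  -- integrability
  have hfint : Integrable f μ := by
    have h1 : Integrable (⇑(v - u)) μ := L1.integrable_coeFn (v - u)
    have h2 : Integrable (fun x => max ((v - u) x) 0) μ := h1.pos_part
    refine h2.congr ?_
    filter_upwards [Lp.coeFn_sub v u] with x hx
    rw [hx]; simp [hf, Pi.sub_apply]
  have hpf : Integrable (fun x => p x * f x) μ := hfint.smul_of_top_right (Lp.memLp p)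
  have hqf : Integrable (fun x => q x * f x) μ := hfint.smul_of_top_right (Lp.memLp q)
  -- rewrite the two subgradient integrals
  have e1 : ∫ x, p x * ((u ⊔ v) x - u x) ∂μ = ∫ x, p x * f x ∂μ := by
    refine integral_congr_ae ?_
    filter_upwards [hsupeq] with x hx; rw [hx]
  have e2 : ∫ x, q x * ((u ⊓ v) x - v x) ∂μ = -∫ x, q x * f x ∂μ := by
    rw [← integral_neg]
    refine integral_congr_ae ?_
    filter_upwards [hinfeq] with x hx; rw [hx]; ring
  rw [e1] at h1; rw [e2] at h2
  have key : ∫ x, p x * f x ∂μ ≤ ∫ x, q x * f x ∂μ := by linarith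
  have : ∫ x, (q x - p x) * f x ∂μ = (∫ x, q x * f x ∂μ) - ∫ x, p x * f x ∂μ := by
    rw [← integral_sub hqf hpf]
    congr 1; funext x; ring
  rw [this]; linarith

theorem stmt4 {Ω : Type*} [MeasurableSpace Ω] (μ : Measure Ω)
    (Φ : Lp ℝ 1 μ → ℝ≥0∞)
    (hconv : ∀ w w' : Lp ℝ 1 μ, ∀ θ : ℝ, 0 ≤ θ → θ ≤ 1 →
      Φ (θ • w + (1 - θ) • w') ≤ ENNReal.ofReal θ * Φ w + ENNReal.ofReal (1 - θ) * Φ w')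
    (hsub : ∀ w w' : Lp ℝ 1 μ, Φ (w ⊓ w') + Φ (w ⊔ w') ≤ Φ w + Φ w')
    (u v : Lp ℝ 1 μ) (p q : Lp ℝ ⊤ μ)
    (hΦu : Φ u ≠ ⊤) (hΦv : Φ v ≠ ⊤)
    (hp : ∀ w : Lp ℝ 1 μ,
      ENNReal.ofReal ((Φ u).toReal + ∫ x, p x * (w x - u x) ∂μ) ≤ Φ w)
    (hq : ∀ w : Lp ℝ 1 μ,
      ENNReal.ofReal ((Φ v).toReal + ∫ x, q x * (w x - v x) ∂μ) ≤ Φ w) :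
    0 ≤ ∫ x, (q x - p x) * max (v x - u x) 0 ∂μ ∧
      ∫ x, (q x - p x) * max (u x - v x) 0 ∂μ ≤ 0 := by
  constructor
  · exact stmt4_aux μ Φ hsub u v p q hΦu hΦv hp hq
  · have h := stmt4_aux μ Φ hsub v u q p hΦv hΦu hq hp
    have e : ∫ x, (q x - p x) * max (u x - v x) 0 ∂μ
        = -∫ x, (p x - q x) * max (u x - v x) 0 ∂μ := by
      rw [← integral_neg]
      congr 1; funext x; ring
    rw [e]; linarith
end

section
/- Let (Ω, μ) be a measure space and Φ : L¹(μ) → [0,+∞] convex and submodular (Φ(u∧v) + Φ(u∨v) ≤ Φ(u) + Φ(v) for all u, v). Let v ∈ L¹(μ), q ∈ L^∞(μ) with q ∈ ∂Φ(v), τ > 0, and let u minimize w ↦ Φ(w) + ‖w − v‖₁²/(2τ). Then ‖u − v‖₁/τ ≤ ‖q‖_∞. -/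
open MeasureTheory
open scoped ENNReal

theorem stmt5 {Ω : Type*} [MeasurableSpace Ω] (μ : Measure Ω)
    (Φ : Lp ℝ 1 μ → ℝ≥0∞)
    (hconv : ∀ w w' : Lp ℝ 1 μ, ∀ θ : ℝ, 0 ≤ θ → θ ≤ 1 →
      Φ (θ • w + (1 - θ) • w') ≤ ENNReal.ofReal θ * Φ w + ENNReal.ofReal (1 - θ) * Φ w')
    (hsub : ∀ w w' : Lp ℝ 1 μ, Φ (w ⊓ w') + Φ (w ⊔ w') ≤ Φ w + Φ w')
    (v : Lp ℝ 1 μ) (q : Lp ℝ ⊤ μ) (hΦv : Φ v ≠ ⊤)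
    (hq : ∀ w : Lp ℝ 1 μ,
      ENNReal.ofReal ((Φ v).toReal + ∫ x, q x * (w x - v x) ∂μ) ≤ Φ w)
    (τ : ℝ) (hτ : 0 < τ) (u : Lp ℝ 1 μ)
    (hu : ∀ w : Lp ℝ 1 μ, Φ u + ENNReal.ofReal (‖u - v‖ ^ 2 / (2 * τ)) ≤
      Φ w + ENNReal.ofReal (‖w - v‖ ^ 2 / (2 * τ))) :
    ‖u - v‖ / τ ≤ ‖q‖ := by
  set N : ℝ := ‖u - v‖ with hNdef
  have hN0 : 0 ≤ N := norm_nonneg _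
  rcases eq_or_lt_of_le hN0 with hN | hN
  · rw [← hN]
    simp
  -- Φ u ≤ Φ v, hence finite
  have hΦuv : Φ u ≤ Φ v := by
    have h0 := hu v
    simp only [sub_self, norm_zero, ne_eq, zero_pow, OfNat.ofNat_ne_zero,
      not_false_eq_true, zero_div, ENNReal.ofReal_zero, add_zero] at h0
    exact le_trans le_self_add h0
  have hfin : Φ u ≠ ⊤ := fun h => hΦv (top_le_iff.mp (h ▸ hΦuv))
  set A : ℝ := (Φ u).toReal with hAdef
  set B : ℝ := (Φ v).toReal with hBdef
  have hA0 : 0 ≤ A := ENNReal.toReal_nonneg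
  have hB0 : 0 ≤ B := ENNReal.toReal_nonneg
  have hΦuA : Φ u = ENNReal.ofReal A := (ENNReal.ofReal_toReal hfin).symm
  have hΦvB : Φ v = ENNReal.ofReal B := (ENNReal.ofReal_toReal hΦv).symm
  set D : ℝ := N ^ 2 / (2 * τ) with hDdef
  have hD : 0 < D := by positivity
  -- key inequality for θ ∈ [0,1)
  have key : ∀ θ : ℝ, 0 ≤ θ → θ < 1 → A + (1 + θ) * D ≤ B := by
    intro θ hθ0 hθ1
    have h1 := hu (θ • u + (1 - θ) • v)
    have h2 := hconv u v θ hθ0 hθ1.le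
    have hw : θ • u + (1 - θ) • v - v = θ • (u - v) := by
      rw [sub_smul, one_smul, smul_sub]; abel
    have hnorm : ‖θ • u + (1 - θ) • v - v‖ = θ * N := by
      rw [hw, norm_smul, Real.norm_eq_abs, abs_of_nonneg hθ0]
    rw [hnorm] at h1
    have h3 : Φ u + ENNReal.ofReal D ≤
        ENNReal.ofReal θ * Φ u + ENNReal.ofReal (1 - θ) * Φ v
          + ENNReal.ofReal ((θ * N) ^ 2 / (2 * τ)) :=
      h1.trans (add_le_add_left h2 _)
    rw [hΦuA, hΦvB, ← ENNReal.ofReal_mul hθ0, ← ENNReal.ofReal_mul (by linarith),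
      ← ENNReal.ofReal_add (mul_nonneg hθ0 hA0) (mul_nonneg (by linarith) hB0),
      ← ENNReal.ofReal_add (add_nonneg (mul_nonneg hθ0 hA0) (mul_nonneg (by linarith) hB0))
        (by positivity),
      ← ENNReal.ofReal_add hA0 hD.le] at h3
    have h4 : A + D ≤ θ * A + (1 - θ) * B + (θ * N) ^ 2 / (2 * τ) :=
      (ENNReal.ofReal_le_ofReal_iff (add_nonneg (add_nonneg (mul_nonneg hθ0 hA0)
        (mul_nonneg (by linarith) hB0)) (by positivity))).mp h3
    have h5 : (θ * N) ^ 2 / (2 * τ) = θ ^ 2 * D := by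
      rw [hDdef]; ring
    rw [h5] at h4
    nlinarith [mul_pos (sub_pos.mpr hθ1) hD]
  have key2 : A + 2 * D ≤ B := by
    apply le_of_forall_pos_le_add
    intro ε hε
    set θ : ℝ := max 0 (1 - ε / D) with hθdef
    have hθ0 : 0 ≤ θ := le_max_left _ _
    have hθ1 : θ < 1 := by
      apply max_lt one_pos
      have : 0 < ε / D := div_pos hε hD
      linarith
    have h6 := key θ hθ0 hθ1
    have h7 : (1 - θ) * D ≤ ε := by
      have : 1 - ε / D ≤ θ := le_max_right _ _
      have h8 : 1 - θ ≤ ε / D := by linarith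
      calc (1 - θ) * D ≤ (ε / D) * D := by nlinarith
        _ = ε := div_mul_cancel₀ ε (ne_of_gt hD)
    linarith
  -- subgradient inequality at u
  set I : ℝ := ∫ x, q x * (u x - v x) ∂μ with hIdef
  have hsg : B + I ≤ A := by
    have h := hq u
    rw [hΦuA] at h
    exact (ENNReal.ofReal_le_ofReal_iff hA0).mp h
  -- bound on the integral
  have hqb : ∀ᵐ x ∂μ, ‖q x‖ ≤ ‖q‖ := by
    have h := ae_le_eLpNormEssSup (f := fun x => q x) (μ := μ)
    have hne : eLpNormEssSup (fun x => q x) μ ≠ ⊤ := by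
      have := Lp.eLpNorm_ne_top q
      rwa [eLpNorm_exponent_top] at this
    filter_upwards [h] with x hx
    have : ((‖q x‖₊ : ℝ≥0∞)).toReal ≤ (eLpNormEssSup (fun x => q x) μ).toReal :=
      ENNReal.toReal_mono hne hx
    simpa [Lp.norm_def, eLpNorm_exponent_top] using this
  have hint : Integrable (fun x => u x - v x) μ :=
    (L1.integrable_coeFn u).sub (L1.integrable_coeFn v)
  have hNint : ∫ x, ‖u x - v x‖ ∂μ = N := by
    rw [hNdef, L1.norm_eq_integral_norm]
    refine integral_congr_ae ?_
    filter_upwards [Lp.coeFn_sub u v] with x hx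
    rw [hx, Pi.sub_apply]
  have hIbound : -I ≤ ‖q‖ * N := by
    have h1 : -I ≤ |I| := neg_le_abs I
    have h2 : |I| ≤ ∫ x, ‖q x * (u x - v x)‖ ∂μ := by
      rw [hIdef, ← Real.norm_eq_abs]
      exact norm_integral_le_integral_norm _
    have hmul : Integrable (fun x => q x * (u x - v x)) μ :=
      hint.bdd_mul (Lp.aestronglyMeasurable q) hqb
    have h3 : ∫ x, ‖q x * (u x - v x)‖ ∂μ ≤ ∫ x, ‖q‖ * ‖u x - v x‖ ∂μ := by
      refine integral_mono_ae hmul.norm (hint.norm.const_mul _) ?_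
      filter_upwards [hqb] with x hx
      rw [norm_mul]
      exact mul_le_mul_of_nonneg_right hx (norm_nonneg _)
    have h4 : ∫ x, ‖q‖ * ‖u x - v x‖ ∂μ = ‖q‖ * N := by
      rw [integral_const_mul, hNint]
    linarith
  -- combine
  have hfinal : N ^ 2 / τ ≤ ‖q‖ * N := by
    have : 2 * D = N ^ 2 / τ := by rw [hDdef]; ring
    linarith [key2, hsg, hIbound]
  rw [div_le_iff₀ hτ]
  have h9 : N ^ 2 ≤ ‖q‖ * N * τ := (div_le_iff₀ hτ).mp hfinal
  nlinarith
end

section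
/- Let Φ : L¹(μ) → [0,+∞], u⁰ ∈ L¹(μ), and for λ, λ' ≥ 0 let v minimize w ↦ Φ(w) + λ∫ w dμ over {w ≥ u⁰} and v' minimize w ↦ Φ(w) + λ'∫ w dμ over {w ≥ u⁰}. Assume the submodularity inequality Φ(v∧v') + Φ(v∨v') ≤ Φ(v) + Φ(v'). If λ > λ', then ∫ (v − v')⁺ dμ ≤ 0, i.e. v ≤ v' a.e. -/
open MeasureTheory
open scoped ENNReal

theorem stmt7 {Ω : Type*} [MeasurableSpace Ω] (μ : Measure Ω)
    (Φ : Lp ℝ 1 μ → ℝ≥0∞) (u0 : Lp ℝ 1 μ)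
    (lam lam' : ℝ) (hlam' : 0 ≤ lam') (hlt : lam' < lam)
    (v v' : Lp ℝ 1 μ) (hv : u0 ≤ v) (hv' : u0 ≤ v')
    (hΦv : Φ v ≠ ⊤) (hΦv' : Φ v' ≠ ⊤)
    (hsub : Φ (v ⊓ v') + Φ (v ⊔ v') ≤ Φ v + Φ v')
    (hminv : ∀ w : Lp ℝ 1 μ, u0 ≤ w →
      Φ v + ENNReal.ofReal (lam * ∫ x, (v x - u0 x) ∂μ) ≤
        Φ w + ENNReal.ofReal (lam * ∫ x, (w x - u0 x) ∂μ))
    (hminv' : ∀ w : Lp ℝ 1 μ, u0 ≤ w →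
      Φ v' + ENNReal.ofReal (lam' * ∫ x, (v' x - u0 x) ∂μ) ≤
        Φ w + ENNReal.ofReal (lam' * ∫ x, (w x - u0 x) ∂μ)) :
    (∫ x, max (v x - v' x) 0 ∂μ ≤ 0) ∧ v ≤ v' := by
  have hlam : 0 ≤ lam := hlam'.trans hlt.le
  set m : Lp ℝ 1 μ := v ⊓ v' with hm
  set s : Lp ℝ 1 μ := v ⊔ v' with hs
  have hum : u0 ≤ m := le_inf hv hv'
  have hus : u0 ≤ s := hv.trans le_sup_left
  -- a.e. statements
  have hvae : (u0 : Ω → ℝ) ≤ᵐ[μ] v := (Lp.coeFn_le u0 v).mpr hv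
  have hv'ae : (u0 : Ω → ℝ) ≤ᵐ[μ] v' := (Lp.coeFn_le u0 v').mpr hv'
  have hmae : (m : Ω → ℝ) =ᵐ[μ] fun x => min (v x) (v' x) := Lp.coeFn_inf v v'
  have hsae : (s : Ω → ℝ) =ᵐ[μ] fun x => max (v x) (v' x) := Lp.coeFn_sup v v'
  have humae : (u0 : Ω → ℝ) ≤ᵐ[μ] m := (Lp.coeFn_le u0 m).mpr hum
  have husae : (u0 : Ω → ℝ) ≤ᵐ[μ] s := (Lp.coeFn_le u0 s).mpr hus
  -- integrability
  have Iu : Integrable (u0 : Ω → ℝ) μ := L1.integrable_coeFn u0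
  have Iv : Integrable (v : Ω → ℝ) μ := L1.integrable_coeFn v
  have Iv' : Integrable (v' : Ω → ℝ) μ := L1.integrable_coeFn v'
  have Im : Integrable (m : Ω → ℝ) μ := L1.integrable_coeFn m
  have Is : Integrable (s : Ω → ℝ) μ := L1.integrable_coeFn s
  have Ivu : Integrable (fun x => v x - u0 x) μ := Iv.sub Iu
  have Iv'u : Integrable (fun x => v' x - u0 x) μ := Iv'.sub Iu
  have Imu : Integrable (fun x => m x - u0 x) μ := Im.sub Iu
  have Isu : Integrable (fun x => s x - u0 x) μ := Is.sub Iu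
  set A := ∫ x, (v x - u0 x) ∂μ with hA
  set A' := ∫ x, (v' x - u0 x) ∂μ with hA'
  set B := ∫ x, (m x - u0 x) ∂μ with hB
  set C := ∫ x, (s x - u0 x) ∂μ with hC
  have hAnn : 0 ≤ A := integral_nonneg_of_ae (by filter_upwards [hvae] with x hx; simp [sub_nonneg, hx])
  have hA'nn : 0 ≤ A' := integral_nonneg_of_ae (by filter_upwards [hv'ae] with x hx; simp [sub_nonneg, hx])
  have hBnn : 0 ≤ B := integral_nonneg_of_ae (by filter_upwards [humae] with x hx; simp [sub_nonneg, hx])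
  have hCnn : 0 ≤ C := integral_nonneg_of_ae (by filter_upwards [husae] with x hx; simp [sub_nonneg, hx])
  -- key identity B + C = A + A'
  have hsum : B + C = A + A' := by
    rw [hB, hC, hA, hA', ← integral_add Imu Isu,
      ← integral_add Ivu Iv'u]
    refine integral_congr_ae ?_
    filter_upwards [hmae, hsae] with x hxm hxs
    simp only [hxm, hxs]
    have := min_add_max (v x) (v' x)
    ring_nf
    linarith [min_add_max (v x) (v' x)]
  -- A - B = ∫ (v - v')⁺
  have hAB : ∫ x, max (v x - v' x) 0 ∂μ = A - B := by
    rw [hA, hB, ← integral_sub Ivu Imu]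
    refine integral_congr_ae ?_
    filter_upwards [hmae] with x hxm
    simp only [hxm]
    rcases le_total (v x) (v' x) with h | h
    · simp [max_eq_right (sub_nonpos.mpr h), min_eq_left h]
    · simp [max_eq_left (sub_nonneg.mpr h), min_eq_right h]
  -- minimality
  have h1 := hminv m hum
  have h2 := hminv' s hus
  have hms : Φ m ≠ ⊤ ∧ Φ s ≠ ⊤ := by
    have h := hsub.trans_lt (lt_top_iff_ne_top.mpr (ENNReal.add_ne_top.mpr ⟨hΦv, hΦv'⟩))
    exact ⟨(ENNReal.add_lt_top.mp h).1.ne, (ENNReal.add_lt_top.mp h).2.ne⟩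
  -- add the two inequalities and cancel Φ v + Φ v'
  have hadd : Φ v + Φ v' + (ENNReal.ofReal (lam * A) + ENNReal.ofReal (lam' * A')) ≤
      Φ v + Φ v' + (ENNReal.ofReal (lam * B) + ENNReal.ofReal (lam' * C)) := by
    calc Φ v + Φ v' + (ENNReal.ofReal (lam * A) + ENNReal.ofReal (lam' * A'))
        = (Φ v + ENNReal.ofReal (lam * A)) + (Φ v' + ENNReal.ofReal (lam' * A')) := by ring
      _ ≤ (Φ m + ENNReal.ofReal (lam * B)) + (Φ s + ENNReal.ofReal (lam' * C)) :=
          add_le_add h1 h2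
      _ = (Φ m + Φ s) + (ENNReal.ofReal (lam * B) + ENNReal.ofReal (lam' * C)) := by ring
      _ ≤ Φ v + Φ v' + (ENNReal.ofReal (lam * B) + ENNReal.ofReal (lam' * C)) :=
          add_le_add_left hsub _
  have hcancel : ENNReal.ofReal (lam * A) + ENNReal.ofReal (lam' * A') ≤
      ENNReal.ofReal (lam * B) + ENNReal.ofReal (lam' * C) :=
    (ENNReal.add_le_add_iff_left (ENNReal.add_ne_top.mpr ⟨hΦv, hΦv'⟩)).mp hadd
  have hreal : lam * A + lam' * A' ≤ lam * B + lam' * C := by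
    rw [← ENNReal.ofReal_add (by positivity) (by positivity),
      ← ENNReal.ofReal_add (by positivity) (by positivity)] at hcancel
    exact (ENNReal.ofReal_le_ofReal_iff (by positivity)).mp hcancel
  have hABle : A - B ≤ 0 := by nlinarith [hreal, hsum]
  have hint : ∫ x, max (v x - v' x) 0 ∂μ ≤ 0 := by rw [hAB]; exact hABle
  refine ⟨hint, ?_⟩
  have hIpos : Integrable (fun x => max (v x - v' x) 0) μ := (Iv.sub Iv').pos_part
  have hnn : 0 ≤ᵐ[μ] fun x => max (v x - v' x) 0 :=
    Filter.Eventually.of_forall fun x => le_max_right _ _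
  have hz : ∫ x, max (v x - v' x) 0 ∂μ = 0 :=
    le_antisymm hint (integral_nonneg fun x => le_max_right _ _)
  have hae0 : (fun x => max (v x - v' x) 0) =ᵐ[μ] 0 :=
    ((integral_eq_zero_iff_of_nonneg_ae hnn hIpos).mp hz)
  rw [← Lp.coeFn_le]
  filter_upwards [hae0] with x hx
  have : max (v x - v' x) 0 = 0 := hx
  have := le_of_max_le_left (le_of_eq this)
  linarith
end

section
/- Fix R > 0, τ > 0 and consider g(r) = 2πr + (π²/(2τ))(R² − r²)² on [0, R]. Then for τ sufficiently small g has a minimizer r_τ ∈ (0, R), every such minimizer satisfies the stationarity equation 2π = (2π²/τ) r_τ (R² − r_τ²), and r_τ = R − τ/(2πR²) + o(τ) as τ → 0. -/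
open Real Set Filter Asymptotics

lemma aux_min (R τ : ℝ) (hR : 0 < R) (hτ : 0 < τ) (hτ' : τ < π * R ^ 3 / 8)
    {r : ℝ} (hr : r ∈ Icc 0 R)
    (hmin : IsMinOn (fun r' => 2 * π * r' + π ^ 2 / (2 * τ) * (R ^ 2 - r' ^ 2) ^ 2)
      (Icc 0 R) r) :
    r ∈ Ioo 0 R ∧ 2 * π = 2 * π ^ 2 / τ * r * (R ^ 2 - r ^ 2) ∧
      R - r ≤ 4 * τ / (π * R ^ 2) := by
  have hπ := Real.pi_pos
  -- basic bound from g r ≤ g R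
  have hgR := hmin (show R ∈ Icc 0 R from ⟨hR.le, le_refl R⟩)
  simp only [mem_setOf_eq, sub_self, ne_eq, zero_pow, mul_zero, add_zero] at hgR
  have hgR' : π ^ 2 * (R ^ 2 - r ^ 2) ^ 2 ≤ 2 * π * (R - r) * (2 * τ) := by
    have h1 : π ^ 2 / (2 * τ) * (R ^ 2 - r ^ 2) ^ 2 ≤ 2 * π * (R - r) := by
      linarith
    rw [div_mul_eq_mul_div, div_le_iff₀ (by positivity : (0:ℝ) < 2 * τ)] at h1
    linarith
  have hb : R - r ≤ 4 * τ / (π * R ^ 2) := by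
    rw [le_div_iff₀ (by positivity)]
    rcases eq_or_lt_of_le hr.2 with heq | hlt
    · rw [heq]; simp; positivity
    · nlinarith [mul_pos hπ (sub_pos.2 hlt), sq_nonneg (R - r), hr.1,
        mul_nonneg (mul_nonneg hr.1 hR.le) (sq_nonneg (R - r)),
        mul_nonneg (mul_nonneg hr.1 hr.1) (sq_nonneg (R - r))]
  have hr0 : R / 2 < r := by
    have : 4 * τ / (π * R ^ 2) < R / 2 := by
      rw [div_lt_iff₀ (by positivity)]
      nlinarith
    linarith
  -- r < R via test point s = R - t
  have hrR : r < R := by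
    rcases eq_or_lt_of_le hr.2 with heq | hlt
    · exfalso
      set t : ℝ := τ / (2 * π * R ^ 2) with ht_def
      have ht0 : 0 < t := by positivity
      have htτ : t * (2 * π * R ^ 2) = τ := by
        rw [ht_def]
        field_simp
      have htR : t < R := by
        rw [ht_def, div_lt_iff₀ (by positivity)]
        nlinarith
      have hsmem : R - t ∈ Icc 0 R := ⟨by linarith, by linarith⟩
      have hgs := hmin hsmem
      rw [heq] at hgs
      norm_num at hgs
      -- hgs : 2πR ≤ 2π(R-t) + π²/(2τ)(R²-(R-t)²)²
      have hkey : π ^ 2 / (2 * τ) * (R ^ 2 - (R - t) ^ 2) ^ 2 < 2 * π * t := by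
        rw [div_mul_eq_mul_div, div_lt_iff₀ (by positivity : (0:ℝ) < 2 * τ)]
        have hτeq : τ = t * (2 * π * R ^ 2) := htτ.symm
        rw [hτeq]
        nlinarith [mul_pos (mul_pos (mul_pos hπ hπ) (mul_pos ht0 ht0)) (mul_pos hR hR),
          mul_nonneg (mul_nonneg (mul_pos (mul_pos hπ hπ) ht0).le (mul_pos ht0 ht0).le)
            (show (0:ℝ) ≤ 4 * R - t by linarith)]
      nlinarith
    · exact hlt
  refine ⟨⟨by linarith, hrR⟩, ?_, hb⟩
  -- stationarity
  have hloc : IsLocalMin (fun r' => 2 * π * r' + π ^ 2 / (2 * τ) * (R ^ 2 - r' ^ 2) ^ 2) r :=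
    hmin.isLocalMin (Icc_mem_nhds (by linarith) hrR)
  have hder : HasDerivAt (fun r' => 2 * π * r' + π ^ 2 / (2 * τ) * (R ^ 2 - r' ^ 2) ^ 2)
      (2 * π + π ^ 2 / (2 * τ) * (2 * (R ^ 2 - r ^ 2) * (-(2 * r)))) r := by
    have h1 : HasDerivAt (fun r' : ℝ => R ^ 2 - r' ^ 2) (-(2 * r)) r := by
      simpa using (hasDerivAt_pow 2 r).const_sub (R ^ 2)
    have h2 : HasDerivAt (fun r' : ℝ => (R ^ 2 - r' ^ 2) ^ 2)
        (2 * (R ^ 2 - r ^ 2) * (-(2 * r))) r := by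
      simpa using h1.fun_pow 2
    simpa using ((hasDerivAt_id r).const_mul (2 * π)).fun_add (h2.const_mul (π ^ 2 / (2 * τ)))
  have hzero := hloc.hasDerivAt_eq_zero hder
  have hτne : τ ≠ 0 := ne_of_gt hτ
  field_simp at hzero ⊢
  nlinarith [hzero]

lemma aux_ev (R : ℝ) (hR : 0 < R) :
    ∀ᶠ τ : ℝ in nhdsWithin 0 (Ioi 0), 0 < τ ∧ τ < π * R ^ 3 / 8 := by
  have h1 : ∀ᶠ τ : ℝ in nhdsWithin 0 (Ioi 0), τ < π * R ^ 3 / 8 :=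
    Filter.Eventually.filter_mono nhdsWithin_le_nhds
      (eventually_lt_nhds (by positivity))
  filter_upwards [self_mem_nhdsWithin, h1] with τ h2 h3
  exact ⟨h2, h3⟩

theorem stmt19 (R : ℝ) (hR : 0 < R) :
    (∀ᶠ τ : ℝ in nhdsWithin 0 (Ioi 0),
      ∃ r ∈ Ioo 0 R, IsMinOn (fun r' => 2 * π * r' + π ^ 2 / (2 * τ) * (R ^ 2 - r' ^ 2) ^ 2)
        (Icc 0 R) r) ∧
    (∀ᶠ τ : ℝ in nhdsWithin 0 (Ioi 0),
      ∀ r ∈ Icc 0 R,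
        IsMinOn (fun r' => 2 * π * r' + π ^ 2 / (2 * τ) * (R ^ 2 - r' ^ 2) ^ 2) (Icc 0 R) r →
          r ∈ Ioo 0 R ∧ 2 * π = 2 * π ^ 2 / τ * r * (R ^ 2 - r ^ 2)) ∧
    (∀ r : ℝ → ℝ,
      (∀ᶠ τ : ℝ in nhdsWithin 0 (Ioi 0), r τ ∈ Icc 0 R ∧
        IsMinOn (fun r' => 2 * π * r' + π ^ 2 / (2 * τ) * (R ^ 2 - r' ^ 2) ^ 2) (Icc 0 R) (r τ)) →
      (fun τ => r τ - (R - τ / (2 * π * R ^ 2))) =o[nhdsWithin 0 (Ioi 0)] id) := by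
  have hπ := Real.pi_pos
  refine ⟨?_, ?_, ?_⟩
  · filter_upwards [aux_ev R hR] with τ ⟨hτ, hτ'⟩
    have hcont : ContinuousOn (fun r' => 2 * π * r' + π ^ 2 / (2 * τ) * (R ^ 2 - r' ^ 2) ^ 2)
        (Icc 0 R) := Continuous.continuousOn (by continuity)
    obtain ⟨r, hrmem, hrmin⟩ := isCompact_Icc.exists_isMinOn
      (Set.nonempty_Icc.2 hR.le) hcont
    exact ⟨r, (aux_min R τ hR hτ hτ' hrmem hrmin).1, hrmin⟩
  · filter_upwards [aux_ev R hR] with τ ⟨hτ, hτ'⟩ r hrmem hrmin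
    obtain ⟨h1, h2, _⟩ := aux_min R τ hR hτ hτ' hrmem hrmin
    exact ⟨h1, h2⟩
  · intro r hr
    rw [isLittleO_iff]
    intro c hc
    set C : ℝ := 24 / (π ^ 2 * R ^ 5) with hC
    have hCpos : 0 < C := by positivity
    have h1 : ∀ᶠ τ : ℝ in nhdsWithin 0 (Ioi 0), τ < c / C :=
      Filter.Eventually.filter_mono nhdsWithin_le_nhds
        (eventually_lt_nhds (by positivity))
    filter_upwards [aux_ev R hR, h1, hr] with τ ⟨hτ, hτ'⟩ hτc ⟨hrmem, hrmin⟩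
    obtain ⟨⟨hr0, hrR⟩, hst, hb⟩ := aux_min R τ hR hτ hτ' hrmem hrmin
    have hτne : τ ≠ 0 := ne_of_gt hτ
    have hst' : 2 * π * τ = 2 * π ^ 2 * (r τ * (R ^ 2 - r τ ^ 2)) := by
      field_simp at hst
      linear_combination (2 * π) * hst
    have hτeq : τ = π * (r τ * (R ^ 2 - r τ ^ 2)) :=
      mul_left_cancel₀ (show (2:ℝ) * π ≠ 0 by positivity) (by linear_combination hst')
    have hd : r τ - (R - τ / (2 * π * R ^ 2)) =
        -((R - r τ) ^ 2 * (r τ + 2 * R)) / (2 * R ^ 2) := by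
      nth_rewrite 2 [hτeq]
      field_simp
      ring
    have hb' : (R - r τ) * (π * R ^ 2) ≤ 4 * τ := by
      rw [← le_div_iff₀ (by positivity)]
      exact hb
    have hrhalf : R / 2 < r τ := by
      have : 4 * τ / (π * R ^ 2) < R / 2 := by
        rw [div_lt_iff₀ (by positivity)]
        nlinarith
      linarith
    have habs : |r τ - (R - τ / (2 * π * R ^ 2))| ≤ C * τ ^ 2 := by
      rw [hd, abs_div, abs_neg, abs_of_nonneg (by positivity : (0:ℝ) < 2 * R ^ 2).le,
        abs_of_nonneg (by nlinarith [sq_nonneg (R - r τ)] : (0:ℝ) ≤ (R - r τ) ^ 2 * (r τ + 2 * R)),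
        div_le_iff₀ (by positivity : (0:ℝ) < 2 * R ^ 2), hC]
      have hsq : (R - r τ) ^ 2 * (π * R ^ 2) ^ 2 ≤ 16 * τ ^ 2 := by
        nlinarith [hb', mul_nonneg (sub_nonneg.2 hrmem.2) (by positivity : (0:ℝ) ≤ π * R ^ 2)]
      have hmul := mul_le_mul_of_nonneg_right hsq
        (show (0:ℝ) ≤ (r τ + 2 * R) * R by nlinarith)
      have h48 : 24 / (π ^ 2 * R ^ 5) * τ ^ 2 * (2 * R ^ 2) = 48 * τ ^ 2 * R ^ 2 / (π ^ 2 * R ^ 5) := by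
        ring
      rw [h48, le_div_iff₀ (by positivity)]
      have hpos : 0 ≤ 16 * τ ^ 2 * ((R - r τ) * R) :=
        mul_nonneg (by positivity) (mul_nonneg (sub_nonneg.2 hrmem.2) hR.le)
      linarith only [hmul, hpos]
    calc ‖r τ - (R - τ / (2 * π * R ^ 2))‖ = |r τ - (R - τ / (2 * π * R ^ 2))| := rfl
      _ ≤ C * τ ^ 2 := habs
      _ = (C * τ) * τ := by ring
      _ ≤ c * τ := by
          have : C * τ ≤ c := by
            rw [← le_div_iff₀' hCpos]
            exact hτc.le
          nlinarith
      _ = c * ‖id τ‖ := by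
          simp [abs_of_pos hτ]
end
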